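/- For every n ≥ 1 and every deterministic algorithm that queries vertices of the n-cube and receives their full orientation vectors in {-,+}^n, there exists a USO of the n-cube such that none of the first n queried vertices is the global sink; hence any deterministic sink-finding algorithm on n-dimensional USOs requires at least n + 1 vertex queries in the worst case (n queries to know a non-queried sink location, as in the adversarial argument maintaining a hypersink subcube shrinking by one dimension per query). -/

import Mathlib

def memFace {n : ℕ} (f : Fin n → Option Bool) (v : Fin n → Bool) : Prop :=
  ∀ i, ∀ b, f i = some b → v i = b

def isSinkOf {n : ℕ} (O : (Fin n → Bool) → Fin n → Bool)
    (f : Fin n → Option Bool) (v : Fin n → Bool) : Prop :=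
  memFace f v ∧ ∀ i, f i = none → O v i = false

def IsUSO {n : ℕ} (O : (Fin n → Bool) → Fin n → Bool) : Prop :=
  ∀ f : Fin n → Option Bool, ∃! v, isSinkOf O f v

def Consistent {n : ℕ} (O : (Fin n → Bool) → Fin n → Bool) : Prop :=
  ∀ v i, O (Function.update v i (!(v i))) i = !(O v i)

/-- The history of a deterministic algorithm `alg` run against orientation `O`:
a list of queried vertices together with the received orientation vectors. -/
def histAux {n : ℕ}
    (alg : List ((Fin n → Bool) × (Fin n → Bool)) → (Fin n → Bool))
    (O : (Fin n → Bool) → Fin n → Bool) : ℕ → List ((Fin n → Bool) × (Fin n → Bool))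
  | 0 => []
  | k + 1 => histAux alg O k ++ [(alg (histAux alg O k), O (alg (histAux alg O k)))]

/-- The `k`-th vertex queried by `alg` when run against `O`. -/
def query {n : ℕ}
    (alg : List ((Fin n → Bool) × (Fin n → Bool)) → (Fin n → Bool))
    (O : (Fin n → Bool) → Fin n → Bool) (k : ℕ) : Fin n → Bool :=
  alg (histAux alg O k)



def PD {n : ℕ} (g : (Fin n → Bool) → Fin n → Bool) : Prop :=
  ∀ v w (i : Fin n), (∀ j : Fin n, j < i → v j = w j) → g v i = g w i

def Og {n : ℕ} (g : (Fin n → Bool) → Fin n → Bool) : (Fin n → Bool) → Fin n → Bool :=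
  fun v i => Bool.xor (v i) (g v i)

lemma bxor_false {a b : Bool} : Bool.xor a b = false ↔ a = b := by
  cases a <;> cases b <;> simp

def sv {n : ℕ} (g : (Fin n → Bool) → Fin n → Bool) (f : Fin n → Option Bool) (i : Fin n) : Bool :=
  match f i with
  | some b => b
  | none => g (fun j => if h : j < i then sv g f j else false) i
termination_by i.val
decreasing_by exact h

lemma sv_eq {n : ℕ} (g : (Fin n → Bool) → Fin n → Bool) (f : Fin n → Option Bool) (i : Fin n) :
    sv g f i = match f i with
      | some b => b
      | none => g (fun j => if _ : j < i then sv g f j else false) i := by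
  rw [sv]

lemma consistent_Og {n : ℕ} {g : (Fin n → Bool) → Fin n → Bool} (hg : PD g) :
    Consistent (Og g) := by
  intro v i
  have h1 : g (Function.update v i (!(v i))) i = g v i := by
    apply hg
    intro j hj
    rw [Function.update_of_ne (ne_of_lt hj)]
  simp only [Og, Function.update_self, h1]
  cases v i <;> cases g v i <;> rfl

lemma sv_is_sink {n : ℕ} {g : (Fin n → Bool) → Fin n → Bool} (hg : PD g)
    (f : Fin n → Option Bool) : isSinkOf (Og g) f (sv g f) := by
  constructor
  · intro i b hb
    rw [sv_eq, hb]
  · intro i hi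
    have h1 : sv g f i = g (sv g f) i := by
      rw [sv_eq, hi]
      exact hg _ _ _ (fun j hj => by rw [dif_pos hj])
    simp only [Og, bxor_false, h1]

lemma sink_unique {n : ℕ} {g : (Fin n → Bool) → Fin n → Bool} (hg : PD g)
    (f : Fin n → Option Bool) (v : Fin n → Bool) (hv : isSinkOf (Og g) f v) :
    v = sv g f := by
  have key : ∀ m : ℕ, ∀ i : Fin n, i.val < m → v i = sv g f i := by
    intro m
    induction m with
    | zero => intro i hi; omega
    | succ m IH =>
      intro i hi
      cases hfi : f i with
      | some b => rw [hv.1 i b hfi, sv_eq, hfi]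
      | none =>
        have h1 : v i = g v i := bxor_false.mp (hv.2 i hfi)
        have h2 : g v i = g (sv g f) i :=
          hg _ _ _ (fun j hj => IH j (by omega))
        have h3 : sv g f i = g (sv g f) i := by
          rw [sv_eq, hfi]
          exact hg _ _ _ (fun j hj => by rw [dif_pos hj])
        rw [h1, h2, ← h3]
  funext i
  exact key (i.val + 1) i (Nat.lt_succ_self _)

lemma isUSO_Og {n : ℕ} {g : (Fin n → Bool) → Fin n → Bool} (hg : PD g) :
    IsUSO (Og g) :=
  fun f => ⟨sv g f, sv_is_sink hg f, fun v hv => sink_unique hg f v hv⟩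

structure AdvSt (n : ℕ) where
  A : (Fin n → Bool) → Fin n → Bool
  plen : ℕ
  pfx : Fin n → Bool
  hist : List ((Fin n → Bool) × (Fin n → Bool))

/-- The updated arrow function when the adversary extends the hypersink prefix. -/
def advA {n : ℕ} (s : AdvSt n) (v : Fin n → Bool) (h : s.plen < n) :
    (Fin n → Bool) → Fin n → Bool := fun w i =>
  if i = (⟨s.plen, h⟩ : Fin n) ∧ (∀ j : Fin n, j.val < s.plen → w j = v j)
  then !(v ⟨s.plen, h⟩) else s.A w i

def advStep {n : ℕ} (alg : List ((Fin n → Bool) × (Fin n → Bool)) → (Fin n → Bool))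
    (s : AdvSt n) : AdvSt n :=
  if h : (∀ j : Fin n, j.val < s.plen → alg s.hist j = s.pfx j) ∧ s.plen < n then
    ⟨advA s (alg s.hist) h.2, s.plen + 1,
     Function.update s.pfx ⟨s.plen, h.2⟩ (!(alg s.hist ⟨s.plen, h.2⟩)),
     s.hist ++ [(alg s.hist, fun i => Bool.xor (alg s.hist i) (advA s (alg s.hist) h.2 (alg s.hist) i))]⟩
  else
    ⟨s.A, s.plen, s.pfx,
     s.hist ++ [(alg s.hist, fun i => Bool.xor (alg s.hist i) (s.A (alg s.hist) i))]⟩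

def advRun {n : ℕ} (alg : List ((Fin n → Bool) × (Fin n → Bool)) → (Fin n → Bool)) :
    ℕ → AdvSt n
  | 0 => ⟨fun _ _ => false, 0, fun _ => false, []⟩
  | k + 1 => advStep alg (advRun alg k)

section Adv
variable {n : ℕ} (alg : List ((Fin n → Bool) × (Fin n → Bool)) → (Fin n → Bool))

lemma advA_PD {s : AdvSt n} (hs : PD s.A) (v : Fin n → Bool) (h : s.plen < n) :
    PD (advA s v h) := by
  intro v' w i hvw
  unfold advA
  by_cases hi : i = (⟨s.plen, h⟩ : Fin n)
  · subst hi
    have hc : (∀ j : Fin n, j.val < s.plen → v' j = v j) ↔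
        (∀ j : Fin n, j.val < s.plen → w j = v j) := by
      constructor <;> intro hc j hj
      · rw [← hvw j hj]; exact hc j hj
      · rw [hvw j hj]; exact hc j hj
    by_cases hv2 : ∀ j : Fin n, j.val < s.plen → v' j = v j
    · rw [if_pos ⟨rfl, hv2⟩, if_pos ⟨rfl, hc.mp hv2⟩]
    · rw [if_neg (fun hcon => hv2 hcon.2), if_neg (fun hcon => (hc.not.mp hv2) hcon.2)]
      exact hs v' w _ hvw
  · rw [if_neg (fun hcon => hi hcon.1), if_neg (fun hcon => hi hcon.1)]
    exact hs v' w i hvw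

lemma adv_PD : ∀ k, PD ((advRun alg k).A) := by
  intro k
  induction k with
  | zero => intro v w i _; rfl
  | succ k IH =>
    show PD ((advStep alg (advRun alg k)).A)
    unfold advStep
    split
    · exact advA_PD IH _ _
    · exact IH

lemma adv_plen_le : ∀ k, (advRun alg k).plen ≤ k := by
  intro k
  induction k with
  | zero => exact le_refl 0
  | succ k IH =>
    show (advStep alg (advRun alg k)).plen ≤ k + 1
    unfold advStep
    split <;> simp <;> omega

lemma adv_step_mono (k : ℕ) :
    (advRun alg k).plen ≤ (advRun alg (k+1)).plen ∧
    ∀ j : Fin n, j.val < (advRun alg k).plen →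
      (advRun alg (k+1)).pfx j = (advRun alg k).pfx j := by
  show (advRun alg k).plen ≤ (advStep alg (advRun alg k)).plen ∧
    ∀ j : Fin n, _ → (advStep alg (advRun alg k)).pfx j = _
  unfold advStep
  split
  · refine ⟨by simp, ?_⟩
    intro j hj
    simp only
    rw [Function.update_of_ne]
    intro hcon
    rw [hcon] at hj
    simp at hj
  · exact ⟨le_refl _, fun j _ => rfl⟩

lemma adv_mono {k m : ℕ} (hkm : k ≤ m) :
    (advRun alg k).plen ≤ (advRun alg m).plen ∧
    ∀ j : Fin n, j.val < (advRun alg k).plen →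
      (advRun alg m).pfx j = (advRun alg k).pfx j := by
  induction m with
  | zero =>
    have : k = 0 := Nat.le_zero.mp hkm
    subst this; exact ⟨le_refl _, fun j _ => rfl⟩
  | succ m IH =>
    rcases Nat.lt_or_ge k (m+1) with h | h
    · have hk : k ≤ m := Nat.lt_succ_iff.mp h
      obtain ⟨h1, h2⟩ := IH hk
      obtain ⟨h3, h4⟩ := adv_step_mono alg m
      exact ⟨le_trans h1 h3, fun j hj => by
        rw [h4 j (lt_of_lt_of_le hj h1), h2 j hj]⟩
    · have : k = m + 1 := le_antisymm hkm h
      subst this; exact ⟨le_refl _, fun j _ => rfl⟩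

lemma adv_arrow : ∀ k, ∀ w (i : Fin n), i.val < (advRun alg k).plen →
    (∀ j : Fin n, j.val < i.val → w j = (advRun alg k).pfx j) →
    (advRun alg k).A w i = (advRun alg k).pfx i := by
  intro k
  induction k with
  | zero => intro w i hi _; exact absurd hi (Nat.not_lt_zero _)
  | succ k IH =>
    show ∀ w (i : Fin n), i.val < (advStep alg (advRun alg k)).plen →
      (∀ j : Fin n, j.val < i.val → w j = (advStep alg (advRun alg k)).pfx j) →
      (advStep alg (advRun alg k)).A w i = (advStep alg (advRun alg k)).pfx i
    set s := advRun alg k with hs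
    unfold advStep
    split
    · rename_i h
      intro w i hi hw
      simp only at hi hw ⊢
      by_cases hii : i = (⟨s.plen, h.2⟩ : Fin n)
      · subst hii
        have hcond : ∀ j : Fin n, j.val < s.plen → w j = alg s.hist j := by
          intro j hj
          have hj2 : (j : ℕ) < s.plen := hj
          have := hw j hj2
          rw [Function.update_of_ne (by intro hc; rw [hc] at hj2; simp at hj2)] at this
          rw [this, h.1 j hj]
        rw [advA, if_pos ⟨rfl, hcond⟩, Function.update_self]
      · have hi2 : i.val < s.plen := by
          have : i.val ≠ s.plen := fun hc => hii (Fin.ext hc)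
          omega
        have hA : advA s (alg s.hist) h.2 w i = s.A w i := by
          rw [advA, if_neg (fun hc => hii hc.1)]
        rw [hA, Function.update_of_ne hii]
        apply IH w i hi2
        intro j hj
        have := hw j hj
        rwa [Function.update_of_ne (by intro hc; rw [hc] at hj; simp at hj; omega)] at this
    · exact IH

lemma adv_hist_inv : ∀ m, m ≤ n → ∀ e ∈ (advRun alg m).hist,
    (∀ i, e.2 i = Bool.xor (e.1 i) ((advRun alg m).A e.1 i)) ∧
    ∃ d : Fin n, d.val < (advRun alg m).plen ∧ e.1 d ≠ (advRun alg m).pfx d := by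
  intro m
  induction m with
  | zero => intro _ e he; exact absurd he List.not_mem_nil
  | succ m IH =>
    intro hm e he
    have hm' : m ≤ n := Nat.le_of_succ_le hm
    have hplen : (advRun alg m).plen < n := lt_of_le_of_lt (adv_plen_le alg m) hm
    revert he
    show e ∈ (advStep alg (advRun alg m)).hist →
      (∀ i, e.2 i = Bool.xor (e.1 i) ((advStep alg (advRun alg m)).A e.1 i)) ∧
      ∃ d : Fin n, d.val < (advStep alg (advRun alg m)).plen ∧
        e.1 d ≠ (advStep alg (advRun alg m)).pfx d
    set s := advRun alg m with hs
    unfold advStep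
    split
    · rename_i h
      intro he
      simp only at he ⊢
      rcases List.mem_append.mp he with hold | hnew
      · obtain ⟨hans, d, hd, hne⟩ := IH hm' e hold
        have hAe : ∀ i, advA s (alg s.hist) h.2 e.1 i = s.A e.1 i := by
          intro i
          rw [advA, if_neg]
          rintro ⟨-, hc⟩
          exact hne (by rw [hc d hd, h.1 d hd])
        refine ⟨fun i => by rw [hAe i]; exact hans i, d, by omega, ?_⟩
        rw [Function.update_of_ne (by intro hc; rw [hc] at hd; simp at hd)]
        exact hne
      · have he2 : e = (alg s.hist,
            fun i => Bool.xor (alg s.hist i) (advA s (alg s.hist) h.2 (alg s.hist) i)) := by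
          simpa using hnew
        subst he2
        refine ⟨fun i => rfl, ⟨s.plen, h.2⟩, by simp, ?_⟩
        rw [Function.update_self]
        simp
    · rename_i h
      intro he
      simp only at he ⊢
      have hnagree : ¬ ∀ j : Fin n, j.val < s.plen → alg s.hist j = s.pfx j := by
        intro hc; exact h ⟨hc, hplen⟩
      rcases List.mem_append.mp he with hold | hnew
      · exact IH hm' e hold
      · have he2 : e = (alg s.hist, fun i => Bool.xor (alg s.hist i) (s.A (alg s.hist) i)) := by
          simpa using hnew
        subst he2
        push_neg at hnagree
        obtain ⟨d, hd, hne⟩ := hnagree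
        exact ⟨fun i => rfl, d, hd, hne⟩

lemma adv_hist_mem {k m : ℕ} (hkm : k ≤ m) :
    ∀ e ∈ (advRun alg k).hist, e ∈ (advRun alg m).hist := by
  induction m with
  | zero =>
    have : k = 0 := Nat.le_zero.mp hkm
    subst this; exact fun e he => he
  | succ m IH =>
    rcases Nat.lt_or_ge k (m+1) with h | h
    · intro e he
      have he2 := IH (Nat.lt_succ_iff.mp h) e he
      show e ∈ (advStep alg (advRun alg m)).hist
      unfold advStep
      split <;> exact List.mem_append_left _ he2
    · have : k = m + 1 := le_antisymm hkm h
      subst this; exact fun e he => he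

lemma adv_hist_succ (k : ℕ) : ∃ a, (advRun alg (k+1)).hist =
    (advRun alg k).hist ++ [(alg (advRun alg k).hist, a)] := by
  show ∃ a, (advStep alg (advRun alg k)).hist = _
  unfold advStep
  split
  · exact ⟨_, rfl⟩
  · exact ⟨_, rfl⟩

lemma adv_hist_eq : ∀ k, k ≤ n →
    histAux alg (Og ((advRun alg n).A)) k = (advRun alg k).hist := by
  intro k
  induction k with
  | zero => intro _; rfl
  | succ k IH =>
    intro hk
    have IH' := IH (Nat.le_of_succ_le hk)
    obtain ⟨a, ha⟩ := adv_hist_succ alg k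
    have hmem : (alg (advRun alg k).hist, a) ∈ (advRun alg (k+1)).hist := by
      rw [ha]; simp
    have hmem2 := adv_hist_mem alg hk _ hmem
    have hinv := adv_hist_inv alg n le_rfl _ hmem2
    have hOv : Og ((advRun alg n).A) (alg (advRun alg k).hist) = a := by
      funext i; exact (hinv.1 i).symm
    show histAux alg (Og ((advRun alg n).A)) k ++
      [(alg (histAux alg (Og ((advRun alg n).A)) k),
        Og ((advRun alg n).A) (alg (histAux alg (Og ((advRun alg n).A)) k)))] = _
    rw [IH', hOv, ← ha]

end Adv

/-- For every deterministic algorithm there is a USO of the `n`-cube such that none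
of the first `n` queried vertices is the global sink; hence at least `n + 1` vertex
queries are necessary to find the sink. -/
theorem stmt8 {n : ℕ} (hn : 1 ≤ n)
    (alg : List ((Fin n → Bool) × (Fin n → Bool)) → (Fin n → Bool)) :
    ∃ O : (Fin n → Bool) → Fin n → Bool, Consistent O ∧ IsUSO O ∧
      ∀ k < n, ¬ (∀ i, O (query alg O k) i = false) := by
  refine ⟨Og ((advRun alg n).A), consistent_Og (adv_PD alg n), isUSO_Og (adv_PD alg n), ?_⟩
  intro k hk hsink
  have hq : query alg (Og ((advRun alg n).A)) k = alg (advRun alg k).hist := by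
    unfold query
    rw [adv_hist_eq alg k (le_of_lt hk)]
  rw [hq] at hsink
  obtain ⟨a, ha⟩ := adv_hist_succ alg k
  have hmem : (alg (advRun alg k).hist, a) ∈ (advRun alg n).hist := by
    apply adv_hist_mem alg hk
    rw [ha]; simp
  obtain ⟨-, d, hd, hne⟩ := adv_hist_inv alg n le_rfl _ hmem
  have hsv : ∀ i, alg (advRun alg k).hist i = (advRun alg n).A (alg (advRun alg k).hist) i :=
    fun i => bxor_false.mp (hsink i)
  have hpfx : ∀ m : ℕ, ∀ i : Fin n, i.val < m → i.val < (advRun alg n).plen →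
      alg (advRun alg k).hist i = (advRun alg n).pfx i := by
    intro m
    induction m with
    | zero => intro i hi _; omega
    | succ m IH =>
      intro i hi hip
      rw [hsv i]
      exact adv_arrow alg n _ i hip (fun j hj => IH j (by omega) (by omega))
  exact hne (hpfx (d.val + 1) d (Nat.lt_succ_self _) hd)
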